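/- For a uniformly random permutation π of size n and an integer 1 ≤ k ≤ n, the expected size of the sub-permutation of π generated by the entry k equals (2n − k + 1)/(k + 1). -/

import Mathlib

def infixes (l : List ℕ) : List (List ℕ) := (l.tails.map List.inits).flatten

def genLen (l : List ℕ) (k : ℕ) : ℕ :=
  (((infixes l).filter
      (fun s => s.contains k && s.all (fun x => decide (k ≤ x)))).map
    List.length).foldr max 0

open List

lemma mem_infixes (s l : List ℕ) : s ∈ infixes l ↔ s <:+: l := by
  simp only [infixes, mem_flatten, mem_map, mem_tails, mem_inits, infix_iff_prefix_suffix]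
  constructor
  · rintro ⟨L, ⟨t, ht, rfl⟩, hs⟩; exact ⟨t, (mem_inits _ _).1 hs, ht⟩
  · rintro ⟨t, hs, ht⟩; exact ⟨t.inits, ⟨t, ht, rfl⟩, (mem_inits _ _).2 hs⟩

lemma foldr_max_le {L : List ℕ} {m : ℕ} (h : ∀ x ∈ L, x ≤ m) : L.foldr max 0 ≤ m := by
  induction L with
  | nil => simp
  | cons a L ih => simpa using ⟨h a (by simp), ih fun x hx => h x (by simp [hx])⟩

lemma le_foldr_max {L : List ℕ} {x : ℕ} (h : x ∈ L) : x ≤ L.foldr max 0 := by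
  induction L with
  | nil => simp at h
  | cons a L ih =>
    rcases mem_cons.1 h with rfl | h
    · simp
    · exact le_trans (ih h) (by simp)

lemma genLen_le {l : List ℕ} {k m : ℕ}
    (h : ∀ s, s <:+: l → k ∈ s → (∀ x ∈ s, k ≤ x) → s.length ≤ m) : genLen l k ≤ m := by
  apply foldr_max_le
  intro x hx
  simp only [mem_map, mem_filter, mem_infixes, Bool.and_eq_true, List.all_eq_true,
    decide_eq_true_eq] at hx
  obtain ⟨s, ⟨hinf, hk, hall⟩, rfl⟩ := hx
  exact h s hinf (by simpa using hk) hall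

lemma le_genLen {l s : List ℕ} {k : ℕ} (hs : s <:+: l) (hk : k ∈ s)
    (hall : ∀ x ∈ s, k ≤ x) : s.length ≤ genLen l k := by
  apply le_foldr_max
  simp only [mem_map, mem_filter, mem_infixes, Bool.and_eq_true, List.all_eq_true,
    decide_eq_true_eq]
  exact ⟨s, ⟨hs, by simpa using hk, hall⟩, rfl⟩

lemma prefix_takeWhile {p : ℕ → Bool} : ∀ {u l : List ℕ}, u <+: l → (∀ x ∈ u, p x) →
    u <+: l.takeWhile p := by
  intro u
  induction u with
  | nil => intro l _ _; exact nil_prefix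
  | cons a u ih =>
    intro l h hall
    obtain ⟨t, rfl⟩ := h
    rw [cons_append, takeWhile_cons, hall a (by simp), if_pos rfl]
    obtain ⟨w, hw⟩ := ih ⟨t, rfl⟩ (fun x hx => hall x (by simp [hx]))
    exact ⟨w, by rw [cons_append, hw]⟩

lemma append_cons_inj {a : ℕ} : ∀ {xs ys xs' ys' : List ℕ},
    xs ++ a :: ys = xs' ++ a :: ys' → a ∉ xs → a ∉ xs' → xs = xs' ∧ ys = ys' := by
  intro xs
  induction xs with
  | nil =>
    intro ys xs' ys' h h1 h2
    cases xs' with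
    | nil => simpa using h
    | cons b xs' =>
      simp only [nil_append, cons_append, cons.injEq] at h
      exact (h2 (by rw [h.1]; exact mem_cons_self)).elim
  | cons b xs ih =>
    intro ys xs' ys' h h1 h2
    cases xs' with
    | nil =>
      simp only [nil_append, cons_append, cons.injEq] at h
      exact (h1 (by rw [h.1]; exact mem_cons_self)).elim
    | cons c xs' =>
      simp only [cons_append, cons.injEq] at h
      obtain ⟨rfl, h⟩ := h
      obtain ⟨h3, h4⟩ := ih h (fun hm => h1 (mem_cons_of_mem _ hm)) (fun hm => h2 (mem_cons_of_mem _ hm))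
      exact ⟨by rw [h3], h4⟩

/-- The key characterization of `genLen` for a list split around the (unique) entry `k`. -/
lemma genLen_split {A B : List ℕ} {k : ℕ} (hA : k ∉ A) (hB : k ∉ B) :
    genLen (A ++ k :: B) k =
      (A.reverse.takeWhile (fun x => decide (k ≤ x))).length + 1 +
        (B.takeWhile (fun x => decide (k ≤ x))).length := by
  set p : ℕ → Bool := fun x => decide (k ≤ x) with hp
  apply _root_.le_antisymm
  · apply genLen_le
    intro s hinf hks hall
    -- split s at k
    obtain ⟨u, v, rfl⟩ := append_of_mem hks
    obtain ⟨t₁, t₂, hl⟩ := hinf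
    have hl' : (t₁ ++ u) ++ k :: (v ++ t₂) = A ++ k :: B := by
      simpa [append_assoc] using hl
    have hcount : count k (A ++ k :: B) = 1 := by
      simp [count_append, count_cons, count_eq_zero.2 hA, count_eq_zero.2 hB]
    have hcount' : count k ((t₁ ++ u) ++ k :: (v ++ t₂)) = 1 := by rw [hl']; exact hcount
    have hknotl : k ∉ t₁ ++ u ∧ k ∉ v ++ t₂ := by
      simp only [count_append, count_cons_self] at hcount'
      constructor <;> (rw [← count_eq_zero, count_append]; omega)
    obtain ⟨h3, h4⟩ := append_cons_inj hl' hknotl.1 hA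
    -- u is a suffix of A with all entries ≥ k
    have hu : u.length ≤ (A.reverse.takeWhile p).length := by
      have hsuff : u <:+ A := ⟨t₁, h3⟩
      have : u.reverse <+: A.reverse := reverse_prefix.2 hsuff
      exact (by simpa using (prefix_takeWhile this (by
        intro x hx
        simp only [mem_reverse] at hx
        simp [hp, hall x (by simp [hx])])).length_le)
    have hv : v.length ≤ (B.takeWhile p).length := by
      have hpref : v <+: B := ⟨t₂, h4⟩
      exact (prefix_takeWhile hpref (by
        intro x hx
        simp [hp, hall x (by simp [hx])])).length_le
    simp only [length_append, length_cons]
    omega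
  · have hR : ((A.reverse.takeWhile p).reverse ++ k :: B.takeWhile p).length ≤
        genLen (A ++ k :: B) k := by
      apply le_genLen (l := A ++ k :: B)
      · refine ⟨(A.reverse.dropWhile p).reverse, B.dropWhile p, ?_⟩
        have hA' : (A.reverse.dropWhile p).reverse ++ (A.reverse.takeWhile p).reverse = A := by
          rw [← reverse_append, takeWhile_append_dropWhile, reverse_reverse]
        have hB' : B.takeWhile p ++ B.dropWhile p = B := takeWhile_append_dropWhile
        rw [← hA'] ; rw [← hB']
        simp [append_assoc]
      · simp
      · intro x hx
        simp only [mem_append, mem_reverse, mem_cons] at hx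
        rcases hx with hx | rfl | hx
        · simpa [hp] using mem_takeWhile_imp hx
        · exact le_refl _
        · simpa [hp] using mem_takeWhile_imp hx
    simp only [length_append, length_reverse, length_cons] at hR ⊢
    omega


lemma takeWhile_insertIdx_len {p : ℕ → Bool} {a : ℕ} (ha : p a) :
    ∀ (l : List ℕ) (i : ℕ), i ≤ l.length →
    ((l.insertIdx i a).takeWhile p).length =
      if i ≤ (l.takeWhile p).length then (l.takeWhile p).length + 1
      else (l.takeWhile p).length := by
  intro l
  induction l with
  | nil =>
    intro i hi
    obtain rfl := Nat.le_zero.mp hi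
    simp [ha]
  | cons b l ih =>
    intro i hi
    cases i with
    | zero => simp [insertIdx_zero, takeWhile_cons, ha]
    | succ i =>
      rw [insertIdx_succ_cons]
      cases hb : p b with
      | false => simp [takeWhile_cons, hb]
      | true =>
        have hi' : i ≤ l.length := by simpa using hi
        rw [takeWhile_cons_of_pos hb, takeWhile_cons_of_pos hb, length_cons, length_cons,
          ih i hi']
        by_cases h : i ≤ (l.takeWhile p).length <;> simp [h]

lemma insertIdx_append_le {a : ℕ} : ∀ (A B : List ℕ) (i : ℕ), i ≤ A.length →
    (A ++ B).insertIdx i a = (A.insertIdx i a) ++ B := by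
  intro A
  induction A with
  | nil => intro B i hi; obtain rfl := Nat.le_zero.mp hi; simp
  | cons b A ih =>
    intro B i hi
    cases i with
    | zero => simp
    | succ i =>
      simp only [cons_append, insertIdx_succ_cons]
      rw [ih B i (by simpa using hi)]

lemma insertIdx_append_gt {a : ℕ} : ∀ (A B : List ℕ) (i : ℕ), A.length < i →
    (A ++ B).insertIdx i a = A ++ B.insertIdx (i - A.length) a := by
  intro A
  induction A with
  | nil => simp
  | cons b A ih =>
    intro B i hi
    cases i with
    | zero => simp at hi
    | succ i =>
      have hx : i + 1 - (b :: A).length = i - A.length := by simp only [length_cons]; omega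
      simp only [cons_append, insertIdx_succ_cons, hx]
      rw [ih B i (by simpa using hi)]

lemma reverse_insertIdx {a : ℕ} : ∀ (l : List ℕ) (i : ℕ), i ≤ l.length →
    (l.insertIdx i a).reverse = l.reverse.insertIdx (l.length - i) a := by
  intro l
  induction l with
  | nil => intro i hi; obtain rfl := Nat.le_zero.mp hi; simp
  | cons b l ih =>
    intro i hi
    cases i with
    | zero =>
      rw [insertIdx_zero]
      simp only [reverse_cons, length_cons, Nat.sub_zero]
      rw [show l.length + 1 = (l.reverse ++ [b]).length by simp, insertIdx_length_self,
        append_assoc]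
    | succ i =>
      have hx : (b :: l).length - (i + 1) = l.length - i := by simp only [length_cons]; omega
      rw [insertIdx_succ_cons, hx]
      simp only [reverse_cons]
      rw [ih i (by simpa using hi),
        insertIdx_append_le _ _ _ (by simp only [length_reverse]; omega)]

lemma permutations'Aux_eq_map (a : ℕ) (l : List ℕ) :
    List.permutations'Aux a l = (List.range (l.length + 1)).map (fun i => l.insertIdx i a) := by
  apply List.ext_getElem
  · simp [length_permutations'Aux]
  · intro n h1 h2
    simp only [getElem_map, getElem_range]
    exact getElem_permutations'Aux l a n h1

lemma genLen_insertIdx {A B : List ℕ} {k a : ℕ} (hA : k ∉ A) (hB : k ∉ B) (hak : k ≤ a) (hka : k ≠ a)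
    (i : ℕ) (hi : i ≤ (A ++ k :: B).length) :
    genLen ((A ++ k :: B).insertIdx i a) k =
      genLen (A ++ k :: B) k +
        (if A.length - (A.reverse.takeWhile (fun x => decide (k ≤ x))).length ≤ i ∧
            i ≤ A.length + 1 + (B.takeWhile (fun x => decide (k ≤ x))).length
          then 1 else 0) := by
  set p : ℕ → Bool := fun x => decide (k ≤ x) with hp
  have hpa : p a = true := by simp [hp, hak]
  have haL : (A.reverse.takeWhile p).length ≤ A.length := by
    simpa using (takeWhile_prefix p (l := A.reverse)).length_le
  have hbL : (B.takeWhile p).length ≤ B.length := (takeWhile_prefix p).length_le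
  simp only [length_append, length_cons] at hi
  rw [genLen_split hA hB]
  by_cases hiA : i ≤ A.length
  · rw [insertIdx_append_le A (k :: B) i hiA]
    have hA' : k ∉ A.insertIdx i a := by
      rw [mem_insertIdx hiA]
      rintro (h | h)
      · exact hka h
      · exact hA h
    rw [genLen_split hA' hB]
    have h1 : ((A.insertIdx i a).reverse.takeWhile p).length =
        if A.length - i ≤ (A.reverse.takeWhile p).length then (A.reverse.takeWhile p).length + 1
        else (A.reverse.takeWhile p).length := by
      rw [reverse_insertIdx A i hiA,
        takeWhile_insertIdx_len hpa A.reverse (A.length - i) (by simp only [length_reverse]; omega)]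
    rw [h1]
    by_cases hc : A.length - i ≤ (A.reverse.takeWhile p).length
    · rw [if_pos hc, if_pos (by omega)]
      simp only [← hp]; omega
    · rw [if_neg hc, if_neg (by omega)]
      simp only [← hp]; omega
  · rw [insertIdx_append_gt A (k :: B) i (by omega)]
    have hj : i - A.length = (i - A.length - 1) + 1 := by omega
    set j := i - A.length - 1 with hjdef
    rw [hj, insertIdx_succ_cons]
    have hjB : j ≤ B.length := by omega
    have hB' : k ∉ B.insertIdx j a := by
      rw [mem_insertIdx hjB]
      rintro (h | h)
      · exact hka h
      · exact hB h
    rw [genLen_split hA hB']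
    rw [takeWhile_insertIdx_len hpa B j hjB]
    by_cases hc : j ≤ (B.takeWhile p).length
    · rw [if_pos hc, if_pos (by omega)]
      simp only [← hp]; omega
    · rw [if_neg hc, if_neg (by omega)]
      simp only [← hp]; omega

lemma sum_genLen_insert {l : List ℕ} {k a : ℕ} (hnd : l.Nodup) (hk : k ∈ l)
    (ha : ∀ x ∈ l, x < a) :
    ((List.permutations'Aux a l).map (fun s => genLen s k)).sum
      = (l.length + 2) * genLen l k + 1 := by
  obtain ⟨A, B, rfl⟩ := append_of_mem hk
  have hcnt : count k (A ++ k :: B) ≤ 1 := List.nodup_iff_count_le_one.mp hnd k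
  simp only [count_append, count_cons_self] at hcnt
  have hA : k ∉ A := count_eq_zero.1 (by omega)
  have hB : k ∉ B := count_eq_zero.1 (by omega)
  have hak : k ≤ a := (ha k hk).le
  set p : ℕ → Bool := fun x => decide (k ≤ x) with hp
  set aL := (A.reverse.takeWhile p).length with haLdef
  set bL := (B.takeWhile p).length with hbLdef
  have haL : aL ≤ A.length := by
    rw [haLdef]; simpa using (takeWhile_prefix p (l := A.reverse)).length_le
  have hbL : bL ≤ B.length := (takeWhile_prefix p).length_le
  set n := (A ++ k :: B).length with hndef
  have hn : n = A.length + 1 + B.length := by simp [hndef]; omega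
  rw [permutations'Aux_eq_map]
  rw [map_map]
  have hmc : ((List.range (n + 1)).map
        ((fun s => genLen s k) ∘ fun i => (A ++ k :: B).insertIdx i a)) =
      (List.range (n + 1)).map (fun i => genLen (A ++ k :: B) k +
        (if A.length - aL ≤ i ∧ i ≤ A.length + 1 + bL then 1 else 0)) := by
    apply map_congr_left
    intro i hi
    simp only [Function.comp_apply]
    exact genLen_insertIdx hA hB hak (ne_of_lt (ha k hk)) i (by simp only [mem_range] at hi; omega)
  rw [hmc]
  have hbr : ∀ (f : ℕ → ℕ) (N : ℕ), ((List.range N).map f).sum = ∑ i ∈ Finset.range N, f i :=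
    fun f N => rfl
  rw [hbr]
  rw [Finset.sum_add_distrib, Finset.sum_const, Finset.card_range, ← Finset.card_filter]
  have hfilt : (Finset.range (n + 1)).filter
      (fun i => A.length - aL ≤ i ∧ i ≤ A.length + 1 + bL) = Finset.Icc (A.length - aL) (A.length + 1 + bL) := by
    ext i
    simp only [Finset.mem_filter, Finset.mem_range, Finset.mem_Icc]
    omega
  rw [hfilt, Nat.card_Icc]
  rw [genLen_split hA hB, ← haLdef, ← hbLdef]
  have : A.length + 1 + bL + 1 - (A.length - aL) = (aL + 1 + bL) + 1 := by omega
  rw [this]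
  ring

lemma genLen_perm_base {k : ℕ} (hk1 : 1 ≤ k) {π : List ℕ} (hπ : π ~ List.range' 1 k) :
    genLen π k = 1 := by
  have hkmem : k ∈ π := hπ.mem_iff.2 (by rw [mem_range'_1]; omega)
  obtain ⟨A, B, rfl⟩ := append_of_mem hkmem
  have hnd : (A ++ k :: B).Nodup := hπ.nodup_iff.2 nodup_range'
  have hcnt : count k (A ++ k :: B) ≤ 1 := List.nodup_iff_count_le_one.mp hnd k
  simp only [count_append, count_cons_self] at hcnt
  have hA : k ∉ A := count_eq_zero.1 (by omega)
  have hB : k ∉ B := count_eq_zero.1 (by omega)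
  have hsmall : ∀ x ∈ A ++ k :: B, x ≤ k := by
    intro x hx
    have := (hπ.mem_iff.1 hx)
    rw [mem_range'_1] at this
    omega
  rw [genLen_split hA hB]
  have h1 : A.reverse.takeWhile (fun x => decide (k ≤ x)) = [] := by
    rw [takeWhile_eq_nil_iff]
    intro hl hpx
    set x := A.reverse.get ⟨0, hl⟩ with hx
    have hmem : x ∈ A := by rw [← mem_reverse]; exact get_mem _ _
    have h3 : x ≤ k := hsmall x (by simp [hmem])
    have h4 : x ≠ k := fun h => hA (h ▸ hmem)
    simp only [decide_eq_true_eq] at hpx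
    omega
  have h2 : B.takeWhile (fun x => decide (k ≤ x)) = [] := by
    rw [takeWhile_eq_nil_iff]
    intro hl hpx
    set x := B.get ⟨0, hl⟩ with hx
    have hmem : x ∈ B := get_mem _ _
    have h3 : x ≤ k := hsmall x (by simp [hmem])
    have h4 : x ≠ k := fun h => hB (h ▸ hmem)
    simp only [decide_eq_true_eq] at hpx
    omega
  rw [h1, h2]
  simp

lemma sum_map_affine (c : ℕ) (g : List ℕ → ℕ) (L : List (List ℕ)) :
    (L.map (fun x => c * g x + 1)).sum = c * (L.map g).sum + L.length := by
  induction L with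
  | nil => simp
  | cons a L ih =>
    simp only [map_cons, sum_cons, ih, length_cons]
    ring

lemma genLen_sum_step {n k : ℕ} (hk1 : 1 ≤ k) (hkn : k ≤ n) :
    (((List.range' 1 (n + 1)).permutations).map (fun l => genLen l k)).sum
      = (n + 2) * (((List.range' 1 n).permutations).map (fun l => genLen l k)).sum
          + n.factorial := by
  have hperm : (List.range' 1 (n + 1)).permutations ~ ((n + 1) :: List.range' 1 n).permutations' := by
    refine (Perm.permutations ?_).trans (permutations_perm_permutations' _)
    rw [range'_concat, Nat.one_mul, Nat.add_comm 1 n]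
    exact perm_append_singleton _ _
  rw [(hperm.map (fun l => genLen l k)).sum_eq]
  have hdef : ((n + 1) :: List.range' 1 n).permutations'
      = (List.range' 1 n).permutations'.flatMap (List.permutations'Aux (n + 1)) := rfl
  rw [hdef, map_flatMap]
  rw [flatMap_def, sum_flatten, map_map]
  have hmc : ((List.range' 1 n).permutations'.map
        (List.sum ∘ fun a => map (fun l => genLen l k) (List.permutations'Aux (n + 1) a)))
      = (List.range' 1 n).permutations'.map (fun π' => (n + 2) * genLen π' k + 1) := by
    apply map_congr_left
    intro π' hπ'
    have hp : π' ~ List.range' 1 n := mem_permutations'.1 hπ'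
    have hnd : π'.Nodup := hp.nodup_iff.2 nodup_range'
    have hkmem : k ∈ π' := hp.mem_iff.2 (by rw [mem_range'_1]; omega)
    have hlt : ∀ x ∈ π', x < n + 1 := by
      intro x hx
      have := hp.mem_iff.1 hx
      rw [mem_range'_1] at this
      omega
    have hlen : π'.length = n := by rw [hp.length_eq, length_range']
    simp only [Function.comp_apply]
    rw [sum_genLen_insert hnd hkmem hlt, hlen]
  rw [hmc, sum_map_affine]
  have hsum : ((List.range' 1 n).permutations'.map (fun π' => genLen π' k)).sum
      = ((List.range' 1 n).permutations.map (fun l => genLen l k)).sum :=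
    (((permutations_perm_permutations' (List.range' 1 n)).map (fun l => genLen l k)).sum_eq).symm
  have hlen' : (List.range' 1 n).permutations'.length = n.factorial := by
    rw [← (permutations_perm_permutations' (List.range' 1 n)).length_eq,
      length_permutations, length_range']
  rw [hsum, hlen']

theorem expected_genLen (n k : ℕ) (hk1 : 1 ≤ k) (hkn : k ≤ n) :
    (((List.range' 1 n).permutations.map (fun l => (genLen l k : ℚ))).sum) /
        (n.factorial : ℚ) =
      (2 * (n : ℚ) - k + 1) / ((k : ℚ) + 1) := by
  have key : ∀ m : ℕ, k ≤ m →
      ((k : ℚ) + 1) * ((((List.range' 1 m).permutations).map (fun l => genLen l k)).sum : ℚ)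
        = (m.factorial : ℚ) * (2 * m - k + 1) := by
    intro m hm
    induction m, hm using Nat.le_induction with
    | base =>
      have hall : ∀ l ∈ (List.range' 1 k).permutations, genLen l k = 1 := by
        intro l hl
        exact genLen_perm_base hk1 (mem_permutations.1 hl)
      have hsum : (((List.range' 1 k).permutations).map (fun l => genLen l k)).sum
          = k.factorial := by
        rw [map_congr_left hall]
        simp [map_const', sum_replicate, length_permutations, length_range']
      rw [hsum]
      push_cast
      ring
    | succ m hm ih =>
      rw [genLen_sum_step hk1 hm]
      generalize hS : (((List.range' 1 m).permutations).map (fun l => genLen l k)).sum = S at ih ⊢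
      push_cast
      rw [Nat.factorial_succ]
      push_cast
      linear_combination ((m : ℚ) + 2) * ih
  have hfac : (n.factorial : ℚ) ≠ 0 := by positivity
  have hk1' : ((k : ℚ) + 1) ≠ 0 := by positivity
  have hkey := key n hkn
  rw [Nat.cast_list_sum, map_map] at hkey
  simp only [Function.comp_def] at hkey
  field_simp
  linear_combination hkey
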